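/- Let G = (S, 𝓕) be a local forest greedoid, c : S → ℝ a non-negative valued weight function, and define w(A) = Σ_{x ∈ A} c(P_x^A) for every feasible set A ∈ 𝓕, where c(P) denotes Σ_{y ∈ P} c(y). Then every greedy base for minimizing w is a base of G of minimum w-value among all bases. -/

import Mathlib

open Finset

variable {α : Type*} [DecidableEq α] [Fintype α]

/-- `X` is subfeasible: contained in some feasible set. -/
def Subfeasible (F : Set (Finset α)) (X : Finset α) : Prop :=
  ∃ Y ∈ F, X ⊆ Y

/-- Greedoid axioms: `∅` is feasible, and the exchange property. -/
def IsGreedoid (F : Set (Finset α)) : Prop :=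
  (∅ : Finset α) ∈ F ∧
    ∀ X ∈ F, ∀ Y ∈ F, X.card < Y.card → ∃ y ∈ Y, y ∉ X ∧ insert y X ∈ F

/-- Local union property. -/
def LocalUnion (F : Set (Finset α)) : Prop :=
  ∀ A ∈ F, ∀ B ∈ F, Subfeasible F (A ∪ B) → A ∪ B ∈ F

/-- Local intersection property. -/
def LocalInter (F : Set (Finset α)) : Prop :=
  ∀ A ∈ F, ∀ B ∈ F, Subfeasible F (A ∪ B) → A ∩ B ∈ F

/-- Local forest property. -/
def LocalForest (F : Set (Finset α)) : Prop :=
  ∀ A ∈ F, ∀ x y z : α,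
    insert x A ∈ F → insert y A ∈ F → insert x (insert y A) ∈ F →
      insert z (insert x (insert y A)) ∈ F →
      insert z (insert x A) ∈ F ∨ insert z (insert y A) ∈ F

/-- The rank function of a greedoid: max cardinality of a feasible subset. -/
noncomputable def grank (F : Set (Finset α)) (A : Finset α) : ℕ :=
  sSup {n : ℕ | ∃ X ∈ F, X ⊆ A ∧ X.card = n}

/-- A base: a feasible set of maximum size. -/
def IsBase (F : Set (Finset α)) (B : Finset α) : Prop :=
  B ∈ F ∧ ∀ C ∈ F, C.card ≤ B.card

/-- The set of continuations of a feasible set `A`. -/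
def Gamma (F : Set (Finset α)) (A : Finset α) : Set α :=
  {x | x ∉ A ∧ insert x A ∈ F}

/-- `P` is the `x`-path in `A`: the unique inclusion-minimal feasible subset
of `A` containing `x`. -/
def IsPathIn (F : Set (Finset α)) (A : Finset α) (x : α) (P : Finset α) : Prop :=
  P ∈ F ∧ P ⊆ A ∧ x ∈ P ∧ ∀ Q ∈ F, Q ⊆ A → x ∈ Q → P ⊆ Q

/-- `P` is a path. -/
def IsPath (F : Set (Finset α)) (P : Finset α) : Prop :=
  ∃ A ∈ F, ∃ x ∈ A, IsPathIn F A x P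

/-- `l` is a feasible ordering (of the set of its elements): every prefix is feasible. -/
def FeasibleOrdering (F : Set (Finset α)) (l : List α) : Prop :=
  l.Nodup ∧ ∀ i : ℕ, (l.take i).toFinset ∈ F

/-- `B` is a greedy base for maximizing `w`. -/
def GreedyMaxBase (F : Set (Finset α)) (w : Finset α → ℝ) (B : Finset α) : Prop :=
  IsBase F B ∧ ∃ l : List α, FeasibleOrdering F l ∧ l.toFinset = B ∧
    ∀ (i : ℕ) (hi : i < l.length), ∀ y ∈ Gamma F (l.take i).toFinset,
      w (insert y (l.take i).toFinset) ≤ w (insert (l.get ⟨i, hi⟩) (l.take i).toFinset)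

/-- `B` is a greedy base for minimizing `w`. -/
def GreedyMinBase (F : Set (Finset α)) (w : Finset α → ℝ) (B : Finset α) : Prop :=
  IsBase F B ∧ ∃ l : List α, FeasibleOrdering F l ∧ l.toFinset = B ∧
    ∀ (i : ℕ) (hi : i < l.length), ∀ y ∈ Gamma F (l.take i).toFinset,
      w (insert (l.get ⟨i, hi⟩) (l.take i).toFinset) ≤ w (insert y (l.take i).toFinset)

/-- The shadow vector of a feasible set `B`: `sh_B(x) = |B| - r(B \ {x})`. -/
noncomputable def shVec (F : Set (Finset α)) (B : Finset α) : α → ℝ :=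
  fun x => (B.card : ℝ) - (grank F (B.erase x) : ℝ)

section Helpers

variable {F : Set (Finset α)} {P : Finset α → α → Finset α}
set_option linter.unusedSectionVars false

lemma pathIn_unique {A : Finset α} {t : α} {P1 P2 : Finset α}
    (h1 : IsPathIn F A t P1) (h2 : IsPathIn F A t P2) : P1 = P2 :=
  subset_antisymm (h1.2.2.2 P2 h2.1 h2.2.1 h2.2.2.1) (h2.2.2.2 P1 h1.1 h1.2.1 h1.2.2.1)

lemma path_stable (hI : LocalInter F)
    (hP : ∀ A ∈ F, ∀ x ∈ A, IsPathIn F A x (P A x))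
    {A A' : Finset α} {t : α} (hA : A ∈ F) (hA' : A' ∈ F) (hsub : A ⊆ A')
    (ht : t ∈ A) : P A' t = P A t := by
  have h' := hP A' hA' t (hsub ht)
  have h := hP A hA t ht
  -- P A' t ⊆ A
  have hPA : P A' t ⊆ A := by
    have hsf : Subfeasible F (P A' t ∪ A) := ⟨A', hA', union_subset h'.2.1 hsub⟩
    have hint : P A' t ∩ A ∈ F := hI _ h'.1 _ hA hsf
    have : P A' t ⊆ P A' t ∩ A :=
      h'.2.2.2 _ hint ((inter_subset_right).trans hsub) (mem_inter.2 ⟨h'.2.2.1, ht⟩)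
    exact this.trans inter_subset_right
  exact subset_antisymm (h'.2.2.2 _ h.1 (h.2.1.trans hsub) h.2.2.1)
    (h.2.2.2 _ h'.1 hPA h'.2.2.1)

lemma chain_step (hG : IsGreedoid F) {C T : Finset α} (hC : C ∈ F) (hT : T ∈ F)
    (hsub : C ⊆ T) (hne : C ≠ T) : ∃ a ∈ T, a ∉ C ∧ insert a C ∈ F :=
  hG.2 C hC T hT (card_lt_card (Finset.ssubset_iff_subset_ne.2 ⟨hsub, hne⟩))

lemma stem_feasible (hG : IsGreedoid F)
    (hP : ∀ A ∈ F, ∀ x ∈ A, IsPathIn F A x (P A x))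
    {A : Finset α} {t : α} (hA : A ∈ F) (ht : t ∈ A) : (P A t).erase t ∈ F := by
  classical
  obtain ⟨hPF, hPA, htP, hmin⟩ := hP A hA t ht
  set Pt := P A t with hPt
  have hne : (Pt.erase t).powerset.filter (· ∈ F) |>.Nonempty := by
    refine ⟨∅, mem_filter.2 ⟨mem_powerset.2 (empty_subset _), hG.1⟩⟩
  obtain ⟨M, hMmem, hMmax⟩ := Finset.exists_max_image _ Finset.card hne
  rw [mem_filter, mem_powerset] at hMmem
  obtain ⟨hMsub, hMF⟩ := hMmem
  -- claim M = Pt.erase t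
  have hcard : M.card < Pt.card := by
    have := card_le_card hMsub
    have h2 : (Pt.erase t).card < Pt.card := card_erase_lt_of_mem htP
    omega
  obtain ⟨v, hvP, hvM, hvF⟩ := hG.2 M hMF Pt hPF hcard
  by_cases hvt : v = t
  · subst hvt
    have hsub2 : Pt ⊆ insert v M := hmin _ hvF
      ((insert_subset_iff).2 ⟨hPA htP, hMsub.trans ((erase_subset _ _).trans hPA)⟩)
      (mem_insert_self _ _)
    have : Pt.erase v ⊆ M := fun a ha => by
      rcases mem_insert.1 (hsub2 (mem_of_mem_erase ha)) with h | h
      · exact absurd h (ne_of_mem_erase ha)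
      · exact h
    have hEq : M = Pt.erase v := subset_antisymm hMsub this
    rw [← hEq]; exact hMF
  · exfalso
    have hmem : insert v M ∈ (Pt.erase t).powerset.filter (· ∈ F) := by
      refine mem_filter.2 ⟨mem_powerset.2 ?_, hvF⟩
      exact insert_subset (mem_erase.2 ⟨hvt, hvP⟩) hMsub
    have := hMmax _ hmem
    rw [card_insert_of_notMem hvM] at this
    omega

lemma graft (hG : IsGreedoid F) {A : Finset α} {x z : α}
    (hz : z ∉ A) (hconf : ¬ Subfeasible F (insert x (insert z A)))
    (hxA : insert x A ∈ F) :
    ∀ T ∈ F, insert z A ⊆ T → x ∉ T → insert x (T.erase z) ∈ F := by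
  intro T hT hzT hxT
  have hzmem : z ∈ T := hzT (mem_insert_self _ _)
  have hcardTgt : (insert x (T.erase z)).card = T.card := by
    rw [card_insert_of_notMem (fun h => hxT (mem_of_mem_erase h)),
      card_erase_of_mem hzmem]
    have : 0 < T.card := card_pos.2 ⟨z, hzmem⟩
    omega
  suffices h : ∀ n : ℕ, ∀ cur : Finset α, cur ∈ F → insert x A ⊆ cur →
      cur ⊆ insert x (T.erase z) → T.card - cur.card = n →
      insert x (T.erase z) ∈ F by
    refine h (T.card - (insert x A).card) (insert x A) hxA subset_rfl ?_ rfl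
    refine insert_subset (mem_insert_self _ _) fun a ha =>
      mem_insert_of_mem (mem_erase.2 ⟨fun hh => hz (hh ▸ ha), hzT (mem_insert_of_mem ha)⟩)
  intro n
  induction n with
  | zero =>
    intro cur hcur hsub1 hsub2 hn
    have hle : T.card ≤ cur.card := by omega
    have : cur = insert x (T.erase z) := by
      apply eq_of_subset_of_card_le hsub2; omega
    rwa [← this]
  | succ n ih =>
    intro cur hcur hsub1 hsub2 hn
    have hlt : cur.card < T.card := by
      have := card_le_card hsub2
      omega
    obtain ⟨v, hvT, hvcur, hvF⟩ := hG.2 cur hcur T hT hlt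
    have hvz : v ≠ z := by
      rintro rfl
      refine hconf ⟨insert v cur, hvF, ?_⟩
      refine insert_subset (mem_insert_of_mem (hsub1 (mem_insert_self _ _))) ?_
      refine insert_subset (mem_insert_self _ _) ?_
      exact fun a ha => mem_insert_of_mem (hsub1 (mem_insert_of_mem ha))
    refine ih (insert v cur) hvF (hsub1.trans (subset_insert _ _)) ?_ ?_
    · exact insert_subset (mem_insert_of_mem (mem_erase.2 ⟨hvz, hvT⟩)) hsub2
    · rw [card_insert_of_notMem hvcur]; omega

lemma z_mem_path (hG : IsGreedoid F) (hU : LocalUnion F)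
    (hP : ∀ A ∈ F, ∀ x ∈ A, IsPathIn F A x (P A x))
    {A B' : Finset α} {z v : α} (hA : A ∈ F) (hB' : B' ∈ F) (hAB : A ⊆ B')
    (Hz : ∀ w ∈ B', w ∉ A → insert w A ∈ F → w = z)
    (hv : v ∈ B') (hvA : v ∉ A) : z ∈ P B' v := by
  obtain ⟨hPF, hPB, hvP, hmin⟩ := hP B' hB' v hv
  have hR : P B' v ∪ A ∈ F := hU _ hPF _ hA ⟨B', hB', union_subset hPB hAB⟩
  have hcard : A.card < (P B' v ∪ A).card := by
    apply card_lt_card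
    exact ⟨subset_union_right, fun hsub => hvA (hsub (mem_union_left _ hvP))⟩
  obtain ⟨t, htR, htA, htF⟩ := hG.2 A hA _ hR hcard
  have htP : t ∈ P B' v := (mem_union.1 htR).resolve_right htA
  have := Hz t (hPB htP) htA htF
  rwa [← this]

end Helpers

section ThmS

section AuxEq
variable {α : Type*} [DecidableEq α]

private lemma auxAbsorb {Sx C : Finset α} (h : Sx ⊆ C) (x : α) :
    C ∪ insert x Sx = insert x C := by
  ext b; have h1 : b ∈ Sx → b ∈ C := fun hb => h hb
  simp only [mem_insert, mem_union]; tauto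

private lemma auxFold {Sx C : Finset α} (h : Sx ⊆ C) (x : α) (bS Ew : Finset α) :
    insert x (C ∪ bS) ∪ (insert x Sx ∪ Ew) = insert x (C ∪ (Ew ∪ bS)) := by
  ext b; have h1 : b ∈ Sx → b ∈ C := fun hb => h hb
  simp only [mem_insert, mem_union]; tauto

private lemma auxIns2 (x a : α) (C S : Finset α) :
    insert a (insert x (C ∪ S)) = insert x (insert a C ∪ S) := by
  ext b; simp only [mem_insert, mem_union]; tauto

private lemma auxIns2' (x e : α) (C S : Finset α) :
    insert e (insert x (C ∪ S)) = insert x (C ∪ insert e S) := by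
  ext b; simp only [mem_insert, mem_union]; tauto

private lemma auxIns3 (x a e : α) (C S : Finset α) :
    insert a (insert e (insert x (C ∪ S))) = insert x (insert a C ∪ insert e S) := by
  ext b; simp only [mem_insert, mem_union]; tauto

private lemma auxIns4 (x a e u : α) (C S : Finset α) :
    insert u (insert a (insert e (insert x (C ∪ S)))) =
      insert x (insert a C ∪ insert u (insert e S)) := by
  ext b; simp only [mem_insert, mem_union]; tauto

private lemma auxIns3' (x a u : α) (C S : Finset α) :
    insert u (insert a (insert x (C ∪ S))) = insert x (insert a C ∪ insert u S) := by
  ext b; simp only [mem_insert, mem_union]; tauto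

private lemma auxIns3'' (x e u : α) (C S : Finset α) :
    insert u (insert e (insert x (C ∪ S))) = insert x (C ∪ insert u (insert e S)) := by
  ext b; simp only [mem_insert, mem_union]; tauto

private lemma auxM1a (x a u : α) (C : Finset α) :
    insert u (insert a (insert x C)) = insert x (insert a C ∪ {u}) := by
  ext b; simp only [mem_insert, mem_union, mem_singleton]; tauto

private lemma auxM1b (x u : α) (C : Finset α) :
    insert u (insert x C) = insert x (C ∪ {u}) := by
  ext b; simp only [mem_insert, mem_union, mem_singleton]; tauto

private lemma auxKill1 {C A : Finset α} {a : α} (hCA : C ⊆ A) (haA : a ∈ A) (u : α) :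
    insert u (insert a C) ∪ A = insert u A := by
  ext b
  have h1 : b ∈ C → b ∈ A := fun hb => hCA hb
  have h2 : b = a → b ∈ A := fun hb => hb ▸ haA
  simp only [mem_insert, mem_union]; tauto

private lemma auxKill2 {C A : Finset α} {a : α} (hCA : C ⊆ A) (haA : a ∈ A)
    (x : α) (D : Finset α) :
    insert x (insert a C ∪ D) ∪ A = insert x (A ∪ D) := by
  ext b
  have h1 : b ∈ C → b ∈ A := fun hb => hCA hb
  have h2 : b = a → b ∈ A := fun hb => hb ▸ haA
  simp only [mem_insert, mem_union]; tauto

end AuxEq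


variable {F : Set (Finset α)} {P : Finset α → α → Finset α}
set_option linter.unusedSectionVars false
set_option maxHeartbeats 1000000

theorem thmS (hG : IsGreedoid F) (hU : LocalUnion F) (hLF : LocalForest F)
    (hP : ∀ A ∈ F, ∀ x ∈ A, IsPathIn F A x (P A x))
    {A B' : Finset α} {x z : α}
    (hA : A ∈ F) (hx : x ∉ A) (hz : z ∉ A) (hxz : x ≠ z)
    (hxA : insert x A ∈ F) (hzA : insert z A ∈ F)
    (hconf : ¬ Subfeasible F (insert x (insert z A)))
    (hB' : B' ∈ F) (hzB : insert z A ⊆ B') (hxB : x ∉ B')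
    (Hz : ∀ w ∈ B', w ∉ A → insert w A ∈ F → w = z) :
    ∀ u ∈ B', u ∉ A → u ≠ z → P (insert x A) x ∪ (P B' u \ insert z A) ∈ F := by
  classical
  have hPx := hP (insert x A) hxA x (mem_insert_self _ _)
  set Px := P (insert x A) x with hPxdef
  set Sx := Px.erase x with hSxdef
  have hSxF : Sx ∈ F := stem_feasible hG hP hxA (mem_insert_self _ _)
  have hSxA : Sx ⊆ A := fun a ha =>
    (mem_insert.1 (hPx.2.1 (mem_of_mem_erase ha))).resolve_left (ne_of_mem_erase ha)
  have hPxeq : Px = insert x Sx := (insert_erase hPx.2.2.1).symm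
  have hAB : A ⊆ B' := (subset_insert _ _).trans hzB
  have hzB' : z ∈ B' := hzB (mem_insert_self _ _)
  -- strong induction on the card of the path of u
  suffices H : ∀ n : ℕ, ∀ u ∈ B', u ∉ A → u ≠ z → (P B' u).card = n →
      Px ∪ (P B' u \ insert z A) ∈ F by
    intro u hu h1 h2; exact H _ u hu h1 h2 rfl
  intro n
  induction n using Nat.strong_induction_on with
  | _ n IH =>
  intro u huB huA huz hcard
  have hPu := hP B' hB' u huB
  set Pu := P B' u with hPudef
  set E := Pu \ insert z A with hEdef
  have huE : u ∈ E := mem_sdiff.2 ⟨hPu.2.2.1, by simp [mem_insert, huz, huA]⟩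
  have hEB : E ⊆ B' := (sdiff_subset).trans (hPu.2.1)
  have hEA : ∀ a ∈ E, a ∉ A := fun a ha h =>
    (mem_sdiff.1 ha).2 (mem_insert_of_mem h)
  have hEz : z ∉ E := fun h => (mem_sdiff.1 h).2 (mem_insert_self _ _)
  have hxE : x ∉ E := fun h => hxB (hEB h)
  have hxPu : x ∉ Pu := fun h => hxB (hPu.2.1 h)
  -- the big ambient feasible set G = insert x (A ∪ E), via grafting
  have hTF : Pu ∪ insert z A ∈ F :=
    hU _ hPu.1 _ hzA ⟨B', hB', union_subset hPu.2.1 hzB⟩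
  have hGgraft := graft hG hz hconf hxA _ hTF subset_union_right
    (by
      intro hmem
      rcases mem_union.1 hmem with h | h
      · exact hxPu h
      · rcases mem_insert.1 h with h | h
        exacts [hxz h, hx h])
  have herase : (Pu ∪ insert z A).erase z = A ∪ E := by
    ext a
    have haz : a ∈ A → a ≠ z := fun h hh => hz (hh ▸ h)
    simp only [mem_erase, mem_union, mem_insert, mem_sdiff, hEdef]
    constructor
    · rintro ⟨h1, h2 | h2⟩
      · by_cases haA : a ∈ A
        · exact Or.inl haA
        · exact Or.inr ⟨h2, by simp [h1, haA]⟩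
      · rcases h2 with h2 | h2
        · exact absurd h2 h1
        · exact Or.inl h2
    · rintro (h | ⟨h1, h2⟩)
      · exact ⟨haz h, Or.inr (Or.inr h)⟩
      · refine ⟨fun hh => h2 ?_, Or.inl h1⟩
        exact Or.inl hh
  rw [herase] at hGgraft
  set G := insert x (A ∪ E) with hGdef
  -- stems and smaller paths
  have hSu : Pu.erase u ∈ F := stem_feasible hG hP hB' huB
  have hwfacts : ∀ w ∈ E.erase u, (P B' w).card < n ∧ w ∈ B' ∧ w ∉ A ∧ w ≠ z ∧
      P B' w ⊆ Pu.erase u := by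
    intro w hw
    have hwE : w ∈ E := mem_of_mem_erase hw
    have hwu : w ≠ u := ne_of_mem_erase hw
    have hwB : w ∈ B' := hEB hwE
    have hPw := hP B' hB' w hwB
    have hsub : P B' w ⊆ Pu.erase u := hPw.2.2.2 _ hSu ((erase_subset _ _).trans hPu.2.1)
      (mem_erase.2 ⟨hwu, (mem_sdiff.1 hwE).1⟩)
    have hcd : (P B' w).card < n := by
      have h1 := card_le_card hsub
      have h2 : (Pu.erase u).card < Pu.card := card_erase_lt_of_mem hPu.2.2.1
      omega
    have hwz : w ≠ z := fun hh => (mem_sdiff.1 hwE).2 (hh ▸ mem_insert_self _ _)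
    exact ⟨hcd, hwB, hEA w hwE, hwz, hsub⟩
  have hYw : ∀ w ∈ E.erase u, Px ∪ (P B' w \ insert z A) ∈ F := by
    intro w hw
    obtain ⟨h1, h2, h3, h4, _⟩ := hwfacts w hw
    exact IH _ h1 w h2 h3 h4 rfl
  have hEwsub : ∀ w ∈ E.erase u, P B' w \ insert z A ⊆ E.erase u := by
    intro w hw a ha
    obtain ⟨_, _, _, _, h5⟩ := hwfacts w hw
    have haPu : a ∈ Pu.erase u := h5 (mem_sdiff.1 ha).1
    exact mem_erase.2 ⟨(mem_erase.1 haPu).1,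
      mem_sdiff.2 ⟨(mem_erase.1 haPu).2, (mem_sdiff.1 ha).2⟩⟩
  have hwEw : ∀ w ∈ E.erase u, w ∈ P B' w \ insert z A := by
    intro w hw
    obtain ⟨_, h2, h3, h4, _⟩ := hwfacts w hw
    exact mem_sdiff.2 ⟨(hP B' hB' w h2).2.2.1, by simp [mem_insert, h4, h3]⟩
  -- FOLD
  have hFold : ∀ S : Finset α, S ⊆ E.erase u → ∀ C, C ∈ F → Sx ⊆ C → C ⊆ A →
      insert x (C ∪ S.biUnion (fun w => P B' w \ insert z A)) ∈ F := by
    intro S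
    induction S using Finset.induction_on with
    | empty =>
      intro _ C hC hSxC hCA
      rw [biUnion_empty, union_empty]
      have heq : C ∪ Px = insert x C := by
        rw [hPxeq]; exact auxAbsorb hSxC x
      have hsf : Subfeasible F (C ∪ Px) :=
        ⟨insert x A, hxA, union_subset (hCA.trans (subset_insert _ _)) hPx.2.1⟩
      have := hU C hC Px hPx.1 hsf
      rwa [heq] at this
    | @insert w S hwS ihS =>
      intro hsub C hC hSxC hCA
      have hwmem : w ∈ E.erase u := hsub (mem_insert_self _ _)
      have hU' := ihS ((subset_insert _ _).trans hsub) C hC hSxC hCA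
      have hYwF := hYw w hwmem
      have hccup : insert x (C ∪ S.biUnion (fun w => P B' w \ insert z A)) ∪
          (Px ∪ (P B' w \ insert z A)) =
          insert x (C ∪ (insert w S).biUnion (fun w => P B' w \ insert z A)) := by
        rw [biUnion_insert, hPxeq]
        exact auxFold hSxC x _ _
      have hfeas := hU _ hU' _ hYwF ⟨G, hGgraft, by
        rw [hccup, hGdef]
        apply insert_subset_insert
        apply union_subset (hCA.trans subset_union_left)
        refine (biUnion_subset.2 fun w hw => ?_).trans subset_union_right
        exact (hEwsub w (hsub hw)).trans (erase_subset _ _)⟩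
      rwa [hccup] at hfeas
  have hbi : ∀ S ⊆ E.erase u, (∀ w ∈ S, P B' w \ insert z A ⊆ S) →
      S.biUnion (fun w => P B' w \ insert z A) = S := by
    intro S hsub hcl
    apply subset_antisymm
    · exact biUnion_subset.2 fun w hw => hcl w hw
    · intro w hw
      exact mem_biUnion.2 ⟨w, hw, hwEw w (hsub hw)⟩
  -- the strip induction
  have hstrip : ∀ k : ℕ, ∀ C, C ∈ F → Sx ⊆ C → C ⊆ A → (A \ C).card = k →
      insert x (C ∪ E) ∈ F := by
    intro k
    induction k with
    | zero =>
      intro C hC hSxC hCA hcd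
      have : C = A := subset_antisymm hCA
        (by
          intro a ha
          by_contra hnot
          have : a ∈ A \ C := mem_sdiff.2 ⟨ha, hnot⟩
          rw [card_eq_zero] at hcd
          simp [hcd] at this)
      rw [this]; exact hGgraft
    | succ k ihk =>
      intro C hC hSxC hCA hcd
      have hne : C ≠ A := by
        intro hh
        rw [hh] at hcd
        simp only [Finset.sdiff_self, card_empty] at hcd
        omega
      obtain ⟨a, haA, haC, haF⟩ := chain_step hG hC hA hCA hne
      have hcd' : (A \ insert a C).card = k := by
        rw [sdiff_insert, card_erase_of_mem (mem_sdiff.2 ⟨haA, haC⟩), hcd]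
        omega
      have hclaimCa : insert x (insert a C ∪ E) ∈ F :=
        ihk (insert a C) haF (hSxC.trans (subset_insert _ _))
          (insert_subset haA hCA) hcd'
      have hax : a ≠ x := fun hh => hx (hh ▸ haA)
      have hau : a ≠ u := fun hh => huA (hh ▸ haA)
      by_cases hEcase : E.erase u = ∅
      · -- m1 : E = {u}
        have hEsing : E = {u} := by
          apply subset_antisymm
          · intro b hb
            by_contra hbu
            have : b ∈ E.erase u := mem_erase.2 ⟨by simpa using hbu, hb⟩
            simp [hEcase] at this
          · simp [huE]
        have hxC : insert x C ∈ F := by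
          have := hFold ∅ (by simp) C hC hSxC hCA
          simpa using this
        have hxCa : insert x (insert a C) ∈ F := by
          have := hFold ∅ (by simp) (insert a C) haF (hSxC.trans (subset_insert _ _))
            (insert_subset haA hCA)
          simpa using this
        have hf3 : insert a (insert x C) ∈ F := by
          rwa [Finset.insert_comm]
        have hf4 : insert u (insert a (insert x C)) ∈ F := by
          have heq : insert x (insert a C ∪ E) = insert u (insert a (insert x C)) := by
            rw [hEsing, ← auxM1a]
          rwa [heq] at hclaimCa
        rcases hLF C hC a x u haF hxC hf3 hf4 with hbad | hgood
        · exfalso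
          have hins : insert u (insert a C) ∪ A = insert u A := auxKill1 hCA haA u
          have huAF : insert u A ∈ F := by
            have := hU _ hbad _ hA ⟨G, hGgraft, by
              rw [hins, hGdef]
              intro b hb
              rcases mem_insert.1 hb with rfl | hb
              · exact mem_insert_of_mem (mem_union_right _ huE)
              · exact mem_insert_of_mem (mem_union_left _ hb)⟩
            rwa [hins] at this
          exact huz (Hz u huB huA huAF)
        · have heq : insert u (insert x C) = insert x (C ∪ E) := by
            rw [hEsing, auxM1b]
          rwa [heq] at hgood
      · -- m2
        obtain ⟨e', he'mem, he'max⟩ := Finset.exists_max_image (E.erase u)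
          (fun w => (P B' w).card) (nonempty_iff_ne_empty.2 hEcase)
        have he'E : e' ∈ E := mem_of_mem_erase he'mem
        have he'u : e' ≠ u := ne_of_mem_erase he'mem
        have he'A : e' ∉ A := hEA e' he'E
        have he'z : e' ≠ z := fun hh => hEz (hh ▸ he'E)
        have he'x : e' ≠ x := fun hh => hxE (hh ▸ he'E)
        have he'notPw : ∀ w ∈ (E.erase u).erase e', e' ∉ P B' w := by
          intro w hw he'Pw
          have hwmem : w ∈ E.erase u := mem_of_mem_erase hw
          have hwe' : w ≠ e' := ne_of_mem_erase hw
          obtain ⟨_, hwB, _, _, _⟩ := hwfacts w hwmem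
          obtain ⟨_, he'B, _, _, _⟩ := hwfacts e' he'mem
          have hPw := hP B' hB' w hwB
          have hPe' := hP B' hB' e' he'B
          have hsub : P B' e' ⊆ P B' w := hPe'.2.2.2 _ hPw.1 hPw.2.1 he'Pw
          have heq : P B' e' = P B' w :=
            eq_of_subset_of_card_le hsub (he'max w hwmem)
          have hwPe' : w ∈ P B' e' := heq ▸ hPw.2.2.1
          have hSe' : (P B' e').erase e' ∈ F := stem_feasible hG hP hB' he'B
          have : P B' w ⊆ (P B' e').erase e' := hPw.2.2.2 _ hSe'
            ((erase_subset _ _).trans hPe'.2.1) (mem_erase.2 ⟨hwe', hwPe'⟩)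
          exact (mem_erase.1 (this he'Pw)).1 rfl
        have hEwsub' : ∀ w ∈ (E.erase u).erase e', P B' w \ insert z A ⊆
            (E.erase u).erase e' := by
          intro w hw b hb
          refine mem_erase.2 ⟨?_, hEwsub w (mem_of_mem_erase hw) hb⟩
          intro hbe'
          exact he'notPw w hw (hbe' ▸ (mem_sdiff.1 hb).1)
        set S1 := (E.erase u).erase e' with hS1def
        set S2 := E.erase u with hS2def
        have hbi1 : S1.biUnion (fun w => P B' w \ insert z A) = S1 :=
          hbi S1 (erase_subset _ _) hEwsub'
        have hbi2 : S2.biUnion (fun w => P B' w \ insert z A) = S2 :=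
          hbi S2 subset_rfl (fun w hw => hEwsub w hw)
        have hQ : insert x (C ∪ S1) ∈ F := by
          have := hFold S1 (erase_subset _ _) C hC hSxC hCA
          rwa [hbi1] at this
        have hQa : insert x (insert a C ∪ S1) ∈ F := by
          have := hFold S1 (erase_subset _ _) (insert a C) haF
            (hSxC.trans (subset_insert _ _)) (insert_subset haA hCA)
          rwa [hbi1] at this
        have hQe' : insert x (C ∪ S2) ∈ F := by
          have := hFold S2 subset_rfl C hC hSxC hCA
          rwa [hbi2] at this
        have hQae' : insert x (insert a C ∪ S2) ∈ F := by
          have := hFold S2 subset_rfl (insert a C) haF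
            (hSxC.trans (subset_insert _ _)) (insert_subset haA hCA)
          rwa [hbi2] at this
        have he'S2 : e' ∈ S2 := he'mem
        have hinsS1 : insert e' S1 = S2 := insert_erase he'mem
        have huS2 : insert u S2 = E := insert_erase huE
        -- prepare LFP instance with base Q := insert x (C ∪ S1)
        have hf1 : insert a (insert x (C ∪ S1)) ∈ F := by
          rw [auxIns2]; exact hQa
        have hf2 : insert e' (insert x (C ∪ S1)) ∈ F := by
          rw [auxIns2', hinsS1]; exact hQe'
        have hf3 : insert a (insert e' (insert x (C ∪ S1))) ∈ F := by
          rw [auxIns3, hinsS1]; exact hQae'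
        have hf4 : insert u (insert a (insert e' (insert x (C ∪ S1)))) ∈ F := by
          rw [auxIns4, hinsS1, huS2]; exact hclaimCa
        rcases hLF _ hQ a e' u hf1 hf2 hf3 hf4 with hbad | hgood
        · -- kill branch via mirror graft
          exfalso
          have h1 : insert u S1 = E.erase e' := by
            rw [hS1def, erase_right_comm]
            exact insert_erase (mem_erase.2 ⟨fun hh => he'u hh.symm, huE⟩)
          have hB1eq : insert u (insert a (insert x (C ∪ S1))) =
              insert x (insert a C ∪ E.erase e') := by
            rw [auxIns3', h1]
          rw [hB1eq] at hbad
          have hNeq : insert x (insert a C ∪ E.erase e') ∪ A =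
              insert x (A ∪ E.erase e') := auxKill2 hCA haA x _
          have hN : insert x (A ∪ E.erase e') ∈ F := by
            have hsf : Subfeasible F (insert x (insert a C ∪ E.erase e') ∪ A) := by
              refine ⟨G, hGgraft, ?_⟩
              rw [hNeq, hGdef]
              exact insert_subset_insert _ (union_subset subset_union_left
                ((erase_subset _ _).trans subset_union_right))
            have := hU _ hbad _ hA hsf
            rwa [hNeq] at this
          have hconf' : ¬ Subfeasible F (insert z (insert x A)) := by
            rwa [Finset.insert_comm]
          have hmirror := graft hG hx hconf' hzA _ hN
            (insert_subset (mem_insert_self _ _)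
              (fun b hb => mem_insert_of_mem (mem_union_left _ hb)))
            (by
              intro hmem
              rcases mem_insert.1 hmem with h | h
              · exact hxz h.symm
              · rcases mem_union.1 h with h | h
                exacts [hz h, hEz (mem_of_mem_erase h)])
          have hNer : (insert x (A ∪ E.erase e')).erase x = A ∪ E.erase e' := by
            apply erase_insert
            intro hmem
            rcases mem_union.1 hmem with h | h
            exacts [hx h, hxE (mem_of_mem_erase h)]
          rw [hNer] at hmirror
          have hMB : insert z (A ∪ E.erase e') ⊆ B' := by
            refine insert_subset hzB' (union_subset hAB ?_)
            exact ((erase_subset _ _).trans hEB)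
          have huM : u ∈ insert z (A ∪ E.erase e') := by
            exact mem_insert_of_mem (mem_union_right _
              (mem_erase.2 ⟨fun hh => he'u hh.symm, huE⟩))
          have hPuM : Pu ⊆ insert z (A ∪ E.erase e') :=
            hPu.2.2.2 _ hmirror hMB huM
          have he'Pu : e' ∈ Pu := (mem_sdiff.1 he'E).1
          have := hPuM he'Pu
          rcases mem_insert.1 this with h | h
          · exact he'z h
          · rcases mem_union.1 h with h | h
            exacts [he'A h, (mem_erase.1 h).1 rfl]
        · rw [auxIns3'', hinsS1, huS2] at hgood
          exact hgood
  -- conclude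
  have hfinal := hstrip (A \ Sx).card Sx hSxF subset_rfl hSxA rfl
  have : insert x (Sx ∪ E) = Px ∪ E := by
    rw [hPxeq, insert_union]
  rwa [this] at hfinal

end ThmS

section KeyMain

variable {F : Set (Finset α)} {P : Finset α → α → Finset α} {c : α → ℝ}
set_option linter.unusedSectionVars false
set_option maxHeartbeats 1000000

private lemma csum_mono (hc : ∀ s, 0 ≤ c s) {X Y : Finset α} (h : X ⊆ Y) :
    ∑ y ∈ X, c y ≤ ∑ y ∈ Y, c y :=
  Finset.sum_le_sum_of_subset_of_nonneg h (fun i _ _ => hc i)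

private lemma csum_union_le (hc : ∀ s, 0 ≤ c s) (X Y : Finset α) :
    ∑ y ∈ X ∪ Y, c y ≤ (∑ y ∈ X, c y) + ∑ y ∈ Y, c y := by
  have h1 : X ∪ Y = X ∪ (Y \ X) := by
    ext b; simp only [mem_union, mem_sdiff]; tauto
  rw [h1, sum_union sdiff_disjoint.symm]
  have := csum_mono hc (sdiff_subset : Y \ X ⊆ Y)
  linarith

private lemma greedy_transfer (hG : IsGreedoid F) (hU : LocalUnion F) (hI : LocalInter F)
    (hP : ∀ A ∈ F, ∀ x ∈ A, IsPathIn F A x (P A x)) (hc : ∀ s, 0 ≤ c s)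
    {A A' : Finset α} {x : α} (hA : A ∈ F) (hA' : A' ∈ F) (hsub : A ⊆ A')
    (hxA : insert x A ∈ F) (hxA' : insert x A' ∈ F) (hx' : x ∉ A')
    (hg : ∀ v, v ∉ A → insert v A ∈ F →
      (∑ y ∈ P (insert x A) x, c y) ≤ ∑ y ∈ P (insert v A) v, c y) :
    ∀ v, v ∉ A' → insert v A' ∈ F →
      (∑ y ∈ P (insert x A') x, c y) ≤ ∑ y ∈ P (insert v A') v, c y := by
  intro v hv hvF
  have hPv := hP (insert v A') hvF v (mem_insert_self _ _)
  have hR : P (insert v A') v ∪ A ∈ F := hU _ hPv.1 _ hA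
    ⟨insert v A', hvF, union_subset hPv.2.1 (hsub.trans (subset_insert _ _))⟩
  have hcard : A.card < (P (insert v A') v ∪ A).card := by
    apply card_lt_card
    refine ⟨subset_union_right, fun hcon => ?_⟩
    exact hv (hsub (hcon (mem_union_left _ hPv.2.2.1)))
  obtain ⟨t, htR, htA, htF⟩ := hG.2 A hA _ hR hcard
  have htPv : t ∈ P (insert v A') v := (mem_union.1 htR).resolve_right htA
  have hstab : P (insert t A) t = P (insert v A') t := by
    have h1 : insert t A ⊆ insert v A' :=
      insert_subset (hPv.2.1 htPv) (hsub.trans (subset_insert _ _))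
    exact (path_stable hI hP htF hvF h1 (mem_insert_self _ _)).symm
  have hsub2 : P (insert v A') t ⊆ P (insert v A') v := by
    have hPt := hP (insert v A') hvF t (hPv.2.1 htPv)
    exact hPt.2.2.2 _ hPv.1 hPv.2.1 htPv
  have hxstab : P (insert x A') x = P (insert x A) x := by
    refine path_stable hI hP hxA hxA' ?_ (mem_insert_self _ _)
    exact insert_subset_insert _ hsub
  rw [hxstab]
  calc (∑ y ∈ P (insert x A) x, c y) ≤ ∑ y ∈ P (insert t A) t, c y := hg t htA htF
    _ = ∑ y ∈ P (insert v A') t, c y := by rw [hstab]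
    _ ≤ ∑ y ∈ P (insert v A') v, c y := csum_mono hc hsub2

private lemma wsum_insert (hI : LocalInter F)
    (hP : ∀ A ∈ F, ∀ x ∈ A, IsPathIn F A x (P A x))
    {A : Finset α} {v : α} (hA : A ∈ F) (hv : v ∉ A) (hvF : insert v A ∈ F) :
    (∑ t ∈ insert v A, ∑ y ∈ P (insert v A) t, c y) =
      (∑ t ∈ A, ∑ y ∈ P A t, c y) + ∑ y ∈ P (insert v A) v, c y := by
  rw [sum_insert hv]
  have : ∀ t ∈ A, (∑ y ∈ P (insert v A) t, c y) = ∑ y ∈ P A t, c y := by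
    intro t ht
    rw [path_stable hI hP hA hvF (subset_insert _ _) ht]
  rw [Finset.sum_congr rfl this]
  ring

private lemma key (hG : IsGreedoid F) (hU : LocalUnion F) (hI : LocalInter F)
    (hLF : LocalForest F) (hc : ∀ s, 0 ≤ c s)
    (hP : ∀ A ∈ F, ∀ x ∈ A, IsPathIn F A x (P A x)) :
    ∀ (k : ℕ) (A : Finset α) (x : α) (B' : Finset α),
    A ∈ F → x ∉ A → insert x A ∈ F → IsBase F B' → A ⊆ B' → x ∉ B' →
    (B' \ A).card = k →
    (∀ v, v ∉ A → insert v A ∈ F →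
      (∑ y ∈ P (insert x A) x, c y) ≤ ∑ y ∈ P (insert v A) v, c y) →
    ∃ B'', IsBase F B'' ∧ insert x A ⊆ B'' ∧
      (∑ t ∈ B'', ∑ y ∈ P B'' t, c y) ≤ ∑ t ∈ B', ∑ y ∈ P B' t, c y := by
  intro k
  induction k with
  | zero =>
    intro A x B' hA hx hxA hBase hAB hxB hcd hg
    exfalso
    have hBA : B' = A := by
      have : B' \ A = ∅ := card_eq_zero.1 hcd
      have hBsub : B' ⊆ A := by
        intro b hb
        by_contra hcon
        have : b ∈ B' \ A := mem_sdiff.2 ⟨hb, hcon⟩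
        simp [‹B' \ A = ∅›] at this
      exact subset_antisymm hBsub hAB
    have := hBase.2 (insert x A) hxA
    rw [hBA, card_insert_of_notMem hx] at this
    omega
  | succ k ih =>
    intro A x B' hA hx hxA hBase hAB hxB hcd hg
    by_cases hcase : ∃ v, v ∈ B' ∧ v ∉ A ∧ insert v A ∈ F ∧ insert x (insert v A) ∈ F
    · obtain ⟨v, hvB, hvA, hvF, hxvF⟩ := hcase
      have hxv : x ≠ v := fun hh => hxB (hh ▸ hvB)
      have hcd' : (B' \ insert v A).card = k := by
        rw [sdiff_insert, card_erase_of_mem (mem_sdiff.2 ⟨hvB, hvA⟩), hcd]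
        omega
      obtain ⟨B'', h1, h2, h3⟩ := ih (insert v A) x B' hvF
        (by simp [mem_insert, hxv, hx]) hxvF hBase (insert_subset hvB hAB) hxB hcd'
        (greedy_transfer hG hU hI hP hc hA hvF (subset_insert _ _) hxA hxvF
          (by simp [mem_insert, hxv, hx]) hg)
      refine ⟨B'', h1, ?_, h3⟩
      exact (insert_subset_insert _ (subset_insert _ _)).trans h2
    · push_neg at hcase
      have hconfall : ∀ v, v ∈ B' → v ∉ A → insert v A ∈ F →
          ¬ Subfeasible F (insert x (insert v A)) := by
        intro v h1 h2 h3 hsf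
        have heq : insert x A ∪ insert v A = insert x (insert v A) := by
          ext b; simp only [mem_union, mem_insert]; tauto
        have := hU _ hxA _ h3 (by rwa [heq])
        rw [heq] at this
        exact hcase v h1 h2 h3 this
      -- grow insert x A inside insert x B'
      have hgrow : ∀ (m : ℕ) (cur : Finset α), cur ∈ F → insert x A ⊆ cur →
          cur ⊆ insert x B' → B'.card - cur.card = m →
          ∃ D, D ∈ F ∧ insert x A ⊆ D ∧ D ⊆ insert x B' ∧ D.card = B'.card := by
        intro m
        induction m with
        | zero =>
          intro cur hcur hsub1 hsub2 hm
          refine ⟨cur, hcur, hsub1, hsub2, ?_⟩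
          have h1 := hBase.2 cur hcur
          omega
        | succ m ihm =>
          intro cur hcur hsub1 hsub2 hm
          have hlt : cur.card < B'.card := by omega
          obtain ⟨v, hvB, hvcur, hvF⟩ := hG.2 cur hcur B' hBase.1 hlt
          refine ihm (insert v cur) hvF (hsub1.trans (subset_insert _ _))
            (insert_subset (mem_insert_of_mem hvB) hsub2) ?_
          rw [card_insert_of_notMem hvcur]; omega
      obtain ⟨D, hD, hxAD, hDsub, hDcard⟩ := hgrow (B'.card - (insert x A).card)
        (insert x A) hxA subset_rfl
        (insert_subset_insert _ hAB) rfl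
      have hDbase : IsBase F D := ⟨hD, fun C hC => (hBase.2 C hC).trans_eq hDcard.symm⟩
      -- identify the missing element z
      have hxD : x ∈ D := hxAD (mem_insert_self _ _)
      have hDx_sub : D.erase x ⊆ B' := by
        intro b hb
        rcases mem_insert.1 (hDsub (mem_of_mem_erase hb)) with h | h
        · exact absurd h (ne_of_mem_erase hb)
        · exact h
      have hBD : (B' \ D).card = 1 := by
        have h1 : (D.erase x).card = B'.card - 1 := by
          rw [card_erase_of_mem hxD, hDcard]
        have h2 : B' \ D = B' \ D.erase x := by
          ext b; simp only [mem_sdiff, mem_erase]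
          constructor
          · rintro ⟨hb1, hb2⟩; exact ⟨hb1, fun hh => hb2 hh.2⟩
          · rintro ⟨hb1, hb2⟩
            refine ⟨hb1, fun hh => hb2 ⟨fun hbx => hxB (hbx ▸ hb1), hh⟩⟩
        have h3 : B' ∩ D.erase x = D.erase x := inter_eq_right.2 hDx_sub
        have h4 := card_sdiff_add_card_inter B' (D.erase x)
        rw [h3] at h4
        have hBpos : 0 < B'.card := by
          have h5 : 0 < D.card := card_pos.2 ⟨x, hxD⟩
          omega
        rw [h2]
        omega
      obtain ⟨z, hzeq⟩ := card_eq_one.1 hBD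
      have hzBD : z ∈ B' \ D := by rw [hzeq]; exact mem_singleton_self z
      have hzB' : z ∈ B' := (mem_sdiff.1 hzBD).1
      have hzD : z ∉ D := (mem_sdiff.1 hzBD).2
      have hzA : z ∉ A := fun hh => hzD (hxAD (mem_insert_of_mem hh))
      have hxz : x ≠ z := fun hh => hxB (hh ▸ hzB')
      have hDeq : D = insert x (B'.erase z) := by
        apply eq_of_subset_of_card_le
        · intro b hb
          rcases mem_insert.1 (hDsub hb) with h | h
          · exact h ▸ mem_insert_self _ _
          · refine mem_insert_of_mem (mem_erase.2 ⟨fun hh => hzD (hh ▸ hb), h⟩)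
        · rw [card_insert_of_notMem (fun hh => hxB (mem_of_mem_erase hh)),
            card_erase_of_mem hzB', hDcard]
          have : 0 < B'.card := card_pos.2 ⟨z, hzB'⟩
          omega
      have Hz : ∀ w ∈ B', w ∉ A → insert w A ∈ F → w = z := by
        intro w hwB hwA hwF
        have hwD : w ∉ D := by
          intro hwD
          refine hconfall w hwB hwA hwF ⟨D, hD, ?_⟩
          refine insert_subset hxD (insert_subset hwD ?_)
          exact (subset_insert _ _).trans hxAD
        have : w ∈ B' \ D := mem_sdiff.2 ⟨hwB, hwD⟩
        rw [hzeq] at this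
        exact mem_singleton.1 this
      -- z is a continuation
      have hzcont : insert z A ∈ F := by
        have hlt : A.card < B'.card := by
          have h6 := card_le_card hxAD
          rw [card_insert_of_notMem hx] at h6
          omega
        obtain ⟨z₀, hz₀B, hz₀A, hz₀F⟩ := hG.2 A hA B' hBase.1 hlt
        have := Hz z₀ hz₀B hz₀A hz₀F
        rwa [this] at hz₀F
      have hconf : ¬ Subfeasible F (insert x (insert z A)) :=
        hconfall z hzB' hzA hzcont
      have hzAB : insert z A ⊆ B' := insert_subset hzB' hAB
      -- path facts
      have hPzstab : P B' z = P (insert z A) z :=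
        path_stable hI hP hzcont hBase.1 hzAB (mem_insert_self _ _)
      have hgz : (∑ y ∈ P (insert x A) x, c y) ≤ ∑ y ∈ P B' z, c y := by
        rw [hPzstab]; exact hg z hzA hzcont
      have hADsub : A ⊆ D := (subset_insert _ _).trans hxAD
      -- main sum comparison
      have hterm : ∀ t ∈ B'.erase z,
          (∑ y ∈ P D t, c y) ≤ ∑ y ∈ P B' t, c y := by
        intro t ht
        have htz : t ≠ z := ne_of_mem_erase ht
        have htB : t ∈ B' := mem_of_mem_erase ht
        have htD : t ∈ D := by rw [hDeq]; exact mem_insert_of_mem ht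
        by_cases htA : t ∈ A
        · rw [path_stable hI hP hA hD hADsub htA, path_stable hI hP hA hBase.1 hAB htA]
        · -- use thmS
          have hY := thmS hG hU hLF hP hA hx hzA hxz hxA hzcont hconf hBase.1 hzAB hxB Hz
            t htB htA htz
          have hPt := hP B' hBase.1 t htB
          have hYD : P (insert x A) x ∪ (P B' t \ insert z A) ⊆ D := by
            rw [hDeq]
            refine union_subset ?_ ?_
            · refine (hP (insert x A) hxA x (mem_insert_self _ _)).2.1.trans ?_
              rw [← hDeq]; exact hxAD
            · intro b hb
              obtain ⟨hb1, hb2⟩ := mem_sdiff.1 hb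
              refine mem_insert_of_mem (mem_erase.2 ⟨?_, hPt.2.1 hb1⟩)
              exact fun hh => hb2 (hh ▸ mem_insert_self _ _)
          have htY : t ∈ P (insert x A) x ∪ (P B' t \ insert z A) :=
            mem_union_right _ (mem_sdiff.2 ⟨hPt.2.2.1, by
              simp only [mem_insert]
              push_neg
              exact ⟨htz, htA⟩⟩)
          have hPDt := hP D hD t htD
          have hsub3 : P D t ⊆ P (insert x A) x ∪ (P B' t \ insert z A) :=
            hPDt.2.2.2 _ hY hYD htY
          have hzPt : z ∈ P B' t := z_mem_path hG hU hP hA hBase.1 hAB Hz htB htA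
          have hPzsub : P B' z ⊆ P B' t ∩ insert z A := by
            refine subset_inter ?_ ?_
            · exact (hP B' hBase.1 z hzB').2.2.2 _ hPt.1 hPt.2.1 hzPt
            · rw [hPzstab]
              exact (hP (insert z A) hzcont z (mem_insert_self _ _)).2.1
          have hsplit : (∑ y ∈ P B' t ∩ insert z A, c y) + ∑ y ∈ P B' t \ insert z A, c y
              = ∑ y ∈ P B' t, c y := Finset.sum_inter_add_sum_sdiff _ _ _
          have hb1 : (∑ y ∈ P D t, c y) ≤
              (∑ y ∈ P (insert x A) x, c y) + ∑ y ∈ P B' t \ insert z A, c y :=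
            (csum_mono hc hsub3).trans (csum_union_le hc _ _)
          have hb2 : (∑ y ∈ P B' z, c y) ≤ ∑ y ∈ P B' t ∩ insert z A, c y :=
            csum_mono hc hPzsub
          linarith
      have hhead : (∑ y ∈ P D x, c y) ≤ ∑ y ∈ P B' z, c y := by
        have : P D x = P (insert x A) x :=
          path_stable hI hP hxA hD hxAD (mem_insert_self _ _)
        rw [this]; exact hgz
      have hsumD : (∑ t ∈ D, ∑ y ∈ P D t, c y) =
          (∑ y ∈ P D x, c y) + ∑ t ∈ B'.erase z, ∑ y ∈ P D t, c y := by
        conv_lhs => rw [hDeq]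
        rw [sum_insert (fun hh => hxB (mem_of_mem_erase hh))]
        rw [← hDeq]
      have hsumB : (∑ t ∈ B', ∑ y ∈ P B' t, c y) =
          (∑ y ∈ P B' z, c y) + ∑ t ∈ B'.erase z, ∑ y ∈ P B' t, c y :=
        (Finset.add_sum_erase _ _ hzB').symm
      refine ⟨D, hDbase, hxAD, ?_⟩
      rw [hsumD, hsumB]
      have := Finset.sum_le_sum hterm
      linarith

end KeyMain

section Main

variable {F : Set (Finset α)} {P : Finset α → α → Finset α} {c : α → ℝ}
set_option linter.unusedSectionVars false
set_option maxHeartbeats 1000000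

theorem statement2' (hG : IsGreedoid F)
    (hU : LocalUnion F) (hI : LocalInter F) (hLF : LocalForest F)
    (hc : ∀ s, 0 ≤ c s)
    (hP : ∀ A ∈ F, ∀ x ∈ A, IsPathIn F A x (P A x))
    (w : Finset α → ℝ)
    (hw : ∀ A ∈ F, w A = ∑ x ∈ A, ∑ y ∈ P A x, c y)
    (B : Finset α) (hB : GreedyMinBase F w B) :
    ∀ B' : Finset α, IsBase F B' → w B ≤ w B' := by
  obtain ⟨hBbase, l, ⟨hnodup, hpref⟩, hlB, hgreedy⟩ := hB
  have main : ∀ (m : ℕ) (i : ℕ), l.length - i = m → ∀ B', IsBase F B' →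
      (l.take i).toFinset ⊆ B' →
      (∑ t ∈ B, ∑ y ∈ P B t, c y) ≤ ∑ t ∈ B', ∑ y ∈ P B' t, c y := by
    intro m
    induction m with
    | zero =>
      intro i hi B' hB' hsub
      have hteq : l.take i = l := List.take_of_length_le (by omega)
      rw [hteq, hlB] at hsub
      have hcard : B'.card ≤ B.card := hBbase.2 B' hB'.1
      have hEq : B = B' := eq_of_subset_of_card_le hsub hcard
      rw [← hEq]
    | succ m ihm =>
      intro i hi B' hB' hsub
      have hilen : i < l.length := by omega
      set x := l.get ⟨i, hilen⟩ with hxdef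
      set A := (l.take i).toFinset with hAdef
      have hA : A ∈ F := hpref i
      have htake : (l.take (i + 1)).toFinset = insert x A := by
        rw [List.take_succ]
        have hget : l[i]? = some x := by
          rw [List.getElem?_eq_getElem hilen]
          rfl
        rw [hget]
        simp only [Option.toList_some, List.toFinset_append, List.toFinset_cons,
          List.toFinset_nil]
        ext b
        simp only [mem_union, mem_insert, Finset.notMem_empty, or_false, LawfulSingleton.insert_empty_eq,
          mem_singleton]
        tauto
      have hA' : insert x A ∈ F := by
        have := hpref (i + 1)
        rwa [htake] at this
      have hxA : x ∉ A := by
        have hnd : (l.take (i + 1)).Nodup := hnodup.sublist (List.take_sublist _ _)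
        rw [List.take_succ] at hnd
        have hget : l[i]? = some x := by
          rw [List.getElem?_eq_getElem hilen]
          rfl
        rw [hget] at hnd
        simp only [Option.toList_some] at hnd
        have := List.disjoint_of_nodup_append hnd
        intro hcon
        exact this (List.mem_toFinset.1 hcon) (List.mem_singleton_self x)
      by_cases hxB' : x ∈ B'
      · refine ihm (i + 1) (by omega) B' hB' ?_
        rw [htake]
        exact insert_subset hxB' hsub
      · have hgr : ∀ v, v ∉ A → insert v A ∈ F →
            (∑ y ∈ P (insert x A) x, c y) ≤ ∑ y ∈ P (insert v A) v, c y := by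
          intro v hv hvF
          have hmem : v ∈ Gamma F A := ⟨hv, hvF⟩
          have hineq := hgreedy i hilen v hmem
          rw [hw _ hA', hw _ hvF] at hineq
          rw [wsum_insert hI hP hA hxA hA', wsum_insert hI hP hA hv hvF] at hineq
          linarith
        obtain ⟨B'', hB''base, hB''sup, hB''le⟩ :=
          key hG hU hI hLF hc hP (B' \ A).card A x B' hA hxA hA' hB' hsub hxB' rfl hgr
        have hstep := ihm (i + 1) (by omega) B'' hB''base (by rw [htake]; exact hB''sup)
        linarith
  intro B' hB'
  have h0 := main l.length 0 (by omega) B' hB' (by simp)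
  rw [hw B hBbase.1, hw B' hB'.1]
  exact h0

end Main


/-- Boyd's theorem: on a local forest greedoid, the greedy algorithm minimizes
`w(A) = Σ_{x ∈ A} c(P_x^A)` for a non-negative weight function `c`. -/
theorem statement2 (F : Set (Finset α)) (hG : IsGreedoid F)
    (hU : LocalUnion F) (hI : LocalInter F) (hLF : LocalForest F)
    (c : α → ℝ) (hc : ∀ s, 0 ≤ c s)
    (P : Finset α → α → Finset α)
    (hP : ∀ A ∈ F, ∀ x ∈ A, IsPathIn F A x (P A x))
    (w : Finset α → ℝ)
    (hw : ∀ A ∈ F, w A = ∑ x ∈ A, ∑ y ∈ P A x, c y)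
    (B : Finset α) (hB : GreedyMinBase F w B) :
    ∀ B' : Finset α, IsBase F B' → w B ≤ w B' := by
  exact statement2' hG hU hI hLF hc hP w hw B hB
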